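/- For all m ≥ 1, A_{m-1,m} = 2^{m-1} · (2m-1)! · (2m+1). -/

import Mathlib

open Finset

noncomputable def A (l m : ℕ) : ℚ :=
  ((l.factorial * m.factorial : ℕ) : ℚ) / 2 ^ (m - l) *
    ∑ k ∈ Finset.Icc l m,
      (2 : ℚ) ^ k * ((2 * m - 2 * k).choose (m - k)) * ((m + k).choose m) * (k.choose l)
theorem A_m1m (m : ℕ) (h : 1 ≤ m) :
    A (m - 1) m = 2 ^ (m - 1) * (2 * m - 1).factorial * (2 * m + 1) := by
  obtain ⟨n, rfl⟩ : ∃ n, m = n + 1 := ⟨m - 1, (Nat.succ_pred_eq_of_pos h).symm⟩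
  unfold A
  rw [show n + 1 - 1 = n from rfl, Finset.sum_Icc_succ_top (Nat.le_succ n),
    Finset.Icc_self, Finset.sum_singleton]
  have e1 : 2 * (n + 1) - 2 * n = 2 := by omega
  have e2 : n + 1 - n = 1 := by omega
  have e3 : 2 * (n + 1) - 2 * (n + 1) = 0 := by omega
  have e4 : 2 * (n + 1) - 1 = 2 * n + 1 := by omega
  rw [e1, e2, e3, e4, Nat.sub_self, Nat.choose_self, Nat.choose_succ_self_right, Nat.choose_self]
  norm_num
  have h1 : (2 * n + 1).choose (n + 1) * (n + 1).factorial * n.factorial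
      = (2 * n + 1).factorial := by
    have := Nat.choose_mul_factorial_mul_factorial (show n + 1 ≤ 2 * n + 1 by omega)
    simpa [show 2 * n + 1 - (n + 1) = n by omega] using this
  have h2 : (2 * (n + 1)).choose (n + 1) * (n + 1).factorial * (n + 1).factorial
      = (2 * (n + 1)).factorial := by
    have := Nat.choose_mul_factorial_mul_factorial (show n + 1 ≤ 2 * (n + 1) by omega)
    simpa [show 2 * (n + 1) - (n + 1) = n + 1 by omega] using this
  have h3 : (2 * (n + 1)).factorial = (2 * n + 2) * (2 * n + 1).factorial := by
    rw [show 2 * (n + 1) = 2 * n + 1 + 1 by ring, Nat.factorial_succ]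
  have q1 : ((2 * n + 1).choose (n + 1) : ℚ) * (n + 1).factorial * n.factorial
      = (2 * n + 1).factorial := by exact_mod_cast congrArg (Nat.cast : ℕ → ℚ) h1
  have q2 : ((2 * (n + 1)).choose (n + 1) : ℚ) * (n + 1).factorial * (n + 1).factorial
      = (2 * (n + 1)).factorial := by exact_mod_cast congrArg (Nat.cast : ℕ → ℚ) h2
  have q3 : ((2 * (n + 1)).factorial : ℚ) = (2 * n + 2) * (2 * n + 1).factorial := by
    exact_mod_cast congrArg (Nat.cast : ℕ → ℚ) h3
  have hn : ((n + 1).factorial : ℚ) = (n + 1) * n.factorial := by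
    exact_mod_cast congrArg (Nat.cast : ℕ → ℚ) (Nat.factorial_succ n)
  rw [show (n:ℕ) + 1 + n = 2 * n + 1 by ring, show (n:ℕ) + 1 + (n + 1) = 2 * (n + 1) by ring]
  have hfne : (n.factorial : ℚ) ≠ 0 := by positivity
  have hfne2 : ((n + 1).factorial : ℚ) ≠ 0 := by positivity
  field_simp
  linear_combination (2:ℚ) ^ (n + 1) * q1 + (2:ℚ) ^ (n + 1) * q2 + (2:ℚ) ^ (n + 1) * q3
    - (2:ℚ) ^ (n + 1) * ((2 * (n + 1)).choose (n + 1) : ℚ) * ((n + 1).factorial : ℚ) * hn
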